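/- The intrinsic Kolmogorov–Sinai distance is subadditive under tensor products: for finite probability spaces X, Y, U, V, k(X⊗U, Y⊗V) ≤ k(X,Y) + k(U,V). -/
import Mathlib


open scoped Classical BigOperators
open Finset

noncomputable section

/-- A probability distribution on a finite set. -/
def IsDist {S : Type*} [Fintype S] (p : S → ℝ) : Prop :=
  (∀ x, 0 ≤ p x) ∧ ∑ x, p x = 1

/-- Shannon entropy (natural logarithm). -/
def ent {S : Type*} [Fintype S] (p : S → ℝ) : ℝ :=
  -∑ x, p x * Real.log (p x)

/-- Relative entropy (Kullback–Leibler divergence). -/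
def KL {S : Type*} [Fintype S] (p q : S → ℝ) : ℝ :=
  ∑ x, p x * Real.log (p x / q x)

/-- The n-fold product (Bernoulli) distribution. -/
def powDist {S : Type*} [Fintype S] (p : S → ℝ) (n : ℕ) : (Fin n → S) → ℝ :=
  fun f => ∏ i, p (f i)

/-- Tensor product of two distributions. -/
def prodDist {S T : Type*} [Fintype S] [Fintype T] (p : S → ℝ) (q : T → ℝ) :
    S × T → ℝ :=
  fun z => p z.1 * q z.2

/-- Empirical distribution of a sequence. -/
def emp {S : Type*} [Fintype S] {n : ℕ} (f : Fin n → S) : S → ℝ :=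
  fun a => ((univ.filter (fun i => f i = a)).card : ℝ) / n

/-- A coupling (joint distribution with given marginals). -/
def IsCoupling {S T : Type*} [Fintype S] [Fintype T]
    (w : S × T → ℝ) (p : S → ℝ) (q : T → ℝ) : Prop :=
  IsDist w ∧ (∀ x, ∑ y, w (x, y) = p x) ∧ (∀ y, ∑ x, w (x, y) = q y)

/-- The intrinsic Kolmogorov–Sinai distance. -/
def kdist {S T : Type*} [Fintype S] [Fintype T] (p : S → ℝ) (q : T → ℝ) : ℝ :=
  sInf {d : ℝ | ∃ w : S × T → ℝ, IsCoupling w p q ∧ d = 2 * ent w - ent p - ent q}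

end

section aux

variable {S T : Type*} [Fintype S] [Fintype T]

lemma isDist_le_one {p : S → ℝ} (hp : IsDist p) (x : S) : p x ≤ 1 := by
  calc p x ≤ ∑ y, p y := Finset.single_le_sum (fun y _ => hp.1 y) (Finset.mem_univ x)
  _ = 1 := hp.2

lemma ent_nonneg {p : S → ℝ} (hp : IsDist p) : 0 ≤ ent p := by
  rw [ent, neg_nonneg]
  apply Finset.sum_nonpos
  intro x _
  exact mul_nonpos_iff.mpr (Or.inl ⟨hp.1 x, Real.log_nonpos (hp.1 x) (isDist_le_one hp x)⟩)

lemma isDist_prodDist {p : S → ℝ} {q : T → ℝ} (hp : IsDist p) (hq : IsDist q) :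
    IsDist (prodDist p q) := by
  constructor
  · intro z; exact mul_nonneg (hp.1 _) (hq.1 _)
  · rw [Fintype.sum_prod_type]
    simp only [prodDist, ← Finset.mul_sum, hq.2, mul_one, hp.2]

lemma ent_prodDist {p : S → ℝ} {q : T → ℝ} (hp : IsDist p) (hq : IsDist q) :
    ent (prodDist p q) = ent p + ent q := by
  have key : ∀ (x : S) (y : T), p x * q y * Real.log (p x * q y)
      = (p x * Real.log (p x)) * q y + p x * (q y * Real.log (q y)) := by
    intro x y
    rcases eq_or_ne (p x) 0 with h | h
    · simp [h]
    rcases eq_or_ne (q y) 0 with h' | h'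
    · simp [h']
    rw [Real.log_mul h h']; ring
  simp only [ent, prodDist, Fintype.sum_prod_type]
  rw [show (∑ x, ∑ y, p x * q y * Real.log (p x * q y))
      = ∑ x, ∑ y, ((p x * Real.log (p x)) * q y + p x * (q y * Real.log (q y))) from
    Finset.sum_congr rfl fun x _ => Finset.sum_congr rfl fun y _ => key x y]
  simp only [Finset.sum_add_distrib, ← Finset.mul_sum, ← Finset.sum_mul, hp.2, hq.2]
  ring

lemma isCoupling_prodDist {p : S → ℝ} {q : T → ℝ} (hp : IsDist p) (hq : IsDist q) :
    IsCoupling (prodDist p q) p q := by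
  refine ⟨isDist_prodDist hp hq, fun x => ?_, fun y => ?_⟩
  · simp only [prodDist, ← Finset.mul_sum, hq.2, mul_one]
  · simp only [prodDist, ← Finset.sum_mul, hp.2, one_mul]

end aux

theorem stmt12 {S T S' T' : Type*} [Fintype S] [Fintype T] [Fintype S'] [Fintype T']
    (p : S → ℝ) (q : T → ℝ) (u : S' → ℝ) (v : T' → ℝ)
    (hp : IsDist p) (hq : IsDist q) (hu : IsDist u) (hv : IsDist v) :
    kdist (prodDist p u) (prodDist q v) ≤ kdist p q + kdist u v := by
  classical
  set P := prodDist p u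
  set Q := prodDist q v
  have hP : IsDist P := isDist_prodDist hp hu
  have hQ : IsDist Q := isDist_prodDist hq hv
  set A := {d : ℝ | ∃ w : S × T → ℝ, IsCoupling w p q ∧ d = 2 * ent w - ent p - ent q}
  set B := {d : ℝ | ∃ w : S' × T' → ℝ, IsCoupling w u v ∧ d = 2 * ent w - ent u - ent v}
  set C := {d : ℝ | ∃ w : (S × S') × (T × T') → ℝ,
      IsCoupling w P Q ∧ d = 2 * ent w - ent P - ent Q}
  have hAne : A.Nonempty :=
    ⟨2 * ent (prodDist p q) - ent p - ent q, prodDist p q, isCoupling_prodDist hp hq, rfl⟩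
  have hBne : B.Nonempty :=
    ⟨2 * ent (prodDist u v) - ent u - ent v, prodDist u v, isCoupling_prodDist hu hv, rfl⟩
  have hCbdd : BddBelow C := by
    refine ⟨-(ent P + ent Q), fun d hd => ?_⟩
    obtain ⟨w, hw, rfl⟩ := hd
    have := ent_nonneg hw.1
    linarith
  -- key step: combining couplings
  have hkey : ∀ a ∈ A, ∀ b ∈ B, a + b ∈ C := by
    rintro a ⟨w, hw, rfl⟩ b ⟨w', hw', rfl⟩
    set e : ((S × S') × (T × T')) ≃ ((S × T) × (S' × T')) :=
      Equiv.prodProdProdComm S S' T T'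
    set W : (S × S') × (T × T') → ℝ := fun z => prodDist w w' (e z) with hW
    have hWdist : IsDist W := by
      constructor
      · intro z; exact mul_nonneg (hw.1.1 _) (hw'.1.1 _)
      · rw [show (∑ z, W z) = ∑ z, prodDist w w' z from
          Equiv.sum_comp e (prodDist w w')]
        exact (isDist_prodDist hw.1 hw'.1).2
    have hWent : ent W = ent w + ent w' := by
      rw [show ent W = ent (prodDist w w') from ?_, ent_prodDist hw.1 hw'.1]
      simp only [ent, hW]
      rw [Equiv.sum_comp e (fun z => prodDist w w' z * Real.log (prodDist w w' z))]
    refine ⟨W, ⟨hWdist, fun x => ?_, fun y => ?_⟩, ?_⟩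
    · obtain ⟨x1, x2⟩ := x
      rw [Fintype.sum_prod_type]
      calc ∑ y1, ∑ y2, W ((x1, x2), (y1, y2))
          = ∑ y1, w (x1, y1) * u x2 := by
            refine Finset.sum_congr rfl fun y1 _ => ?_
            simp only [hW, prodDist, e, Equiv.prodProdProdComm, Equiv.coe_fn_mk]
            rw [← Finset.mul_sum, hw'.2.1 x2]
        _ = P (x1, x2) := by
            rw [← Finset.sum_mul, hw.2.1 x1]; rfl
    · obtain ⟨y1, y2⟩ := y
      rw [Fintype.sum_prod_type]
      calc ∑ x1, ∑ x2, W ((x1, x2), (y1, y2))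
          = ∑ x1, w (x1, y1) * v y2 := by
            refine Finset.sum_congr rfl fun x1 _ => ?_
            simp only [hW, prodDist, e, Equiv.prodProdProdComm, Equiv.coe_fn_mk]
            rw [← Finset.mul_sum, hw'.2.2 y2]
        _ = Q (y1, y2) := by
            rw [← Finset.sum_mul, hw.2.2 y1]; rfl
    · rw [hWent, show ent P = ent p + ent u from ent_prodDist hp hu,
        show ent Q = ent q + ent v from ent_prodDist hq hv]
      ring
  -- conclude
  show sInf C ≤ sInf A + sInf B
  have h1 : sInf C - sInf A ≤ sInf B := by
    refine le_csInf hBne fun b hb => ?_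
    have h2 : sInf C - b ≤ sInf A := by
      refine le_csInf hAne fun a ha => ?_
      have : sInf C ≤ a + b := csInf_le hCbdd (hkey a ha b hb)
      linarith
    linarith
  linarith
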